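/- Let G be a locally finite connected graph with polynomial growth of degree at most d, where d ≥ 2. Then G satisfies the O(n^{d-2})-containment property; that is, there is a constant c' ≥ 1 such that G has the {c'·n^{d-2}}-containment property (protecting at most c'·n^{d-2} vertices at each turn n). -/

import Mathlib

open SimpleGraph

namespace Firefighter

variable {V : Type*}

/-- The set of vertices on fire at time `n`, starting from initial fire `X0`, with fire spreading
along paths of length at most `r` avoiding the protected sets `W 1, ..., W n`. -/
def fireSet (G : SimpleGraph V) (r : ℕ) (X0 : Set V) (W : ℕ → Set V) : ℕ → Set V
  | 0 => X0
  | n + 1 => {v | ∃ u ∈ fireSet G r X0 W n, ∃ p : G.Walk u v, p.length ≤ r ∧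
      ∀ w ∈ p.support, ∀ i, 1 ≤ i → i ≤ n + 1 → w ∉ W i}

/-- `W` is an `(f, r)`-containment strategy for the initial fire `X0` in `G`. -/
def IsContainmentStrategy (G : SimpleGraph V) (r : ℕ) (f : ℕ → ℕ)
    (X0 : Set V) (W : ℕ → Set V) : Prop :=
  (∀ n, 1 ≤ n → (W n).Finite ∧ (W n).ncard ≤ f n) ∧
  (∀ n, Disjoint (fireSet G r X0 W n) (W (n + 1))) ∧
  (∃ N, 0 < N ∧ ∀ n, N ≤ n → fireSet G r X0 W n = fireSet G r X0 W N)

/-- `G` has the `(f, r)`-containment property. -/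
def HasContainmentProperty (G : SimpleGraph V) (r : ℕ) (f : ℕ → ℕ) : Prop :=
  ∀ X0 : Set V, X0.Finite → ∃ W : ℕ → Set V, IsContainmentStrategy G r f X0 W

/-- A graph is locally finite if every vertex has finitely many neighbors. -/
def LocallyFiniteGraph (G : SimpleGraph V) : Prop := ∀ v, (G.neighborSet v).Finite

/-- The ball of radius `n` about the vertex `g0` (in the combinatorial metric). -/
def ball (G : SimpleGraph V) (g0 : V) (n : ℕ) : Set V :=
  {v | G.Reachable g0 v ∧ G.dist g0 v ≤ n}

/-- The sphere of radius `n` about the vertex `g0` (in the combinatorial metric). -/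
def sphere (G : SimpleGraph V) (g0 : V) (n : ℕ) : Set V :=
  {v | G.Reachable g0 v ∧ G.dist g0 v = n}

/-- For `T` a subset of the sphere of radius `n`, `nextAdj G g0 n T` is the set `T*` of vertices
of the sphere of radius `n+1` adjacent to at least one vertex of `T`. -/
def nextAdj (G : SimpleGraph V) (g0 : V) (n : ℕ) (T : Set V) : Set V :=
  {v ∈ sphere G g0 (n + 1) | ∃ u ∈ T, G.Adj u v}

/-- A graph has bounded degree if there is a uniform finite bound on vertex degrees. -/
def BoundedDegree (G : SimpleGraph V) : Prop :=
  ∃ D : ℕ, ∀ v, (G.neighborSet v).Finite ∧ (G.neighborSet v).ncard ≤ D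

/-- Two graphs are quasi-isometric. -/
def QuasiIsometric {V' : Type*} (G : SimpleGraph V) (H : SimpleGraph V') : Prop :=
  ∃ c : ℕ, 1 ≤ c ∧ ∃ (φ : V → V') (ψ : V' → V),
    (∀ g1 g2, H.dist (φ g1) (φ g2) ≤ c * G.dist g1 g2 + c) ∧
    (∀ h1 h2, G.dist (ψ h1) (ψ h2) ≤ c * H.dist h1 h2 + c) ∧
    (∀ g, G.dist g (ψ (φ g)) ≤ c) ∧
    (∀ h, H.dist h (φ (ψ h)) ≤ c)

/-- `f ≼ g` : there is `c > 0` with `f n ≤ c * g (c*n + c) + c` for all `n ≥ c`. -/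
def Preceq (f g : ℕ → ℕ) : Prop :=
  ∃ c : ℕ, 0 < c ∧ ∀ n, c ≤ n → f n ≤ c * g (c * n + c) + c

/-- `f` and `g` have equivalent asymptotic growth. -/
def AsympEquiv (f g : ℕ → ℕ) : Prop := Preceq f g ∧ Preceq g f

/-- The ball of radius `n` about a set `X` of vertices. -/
def ballSet (G : SimpleGraph V) (X : Set V) (n : ℕ) : Set V :=
  {v | ∃ u ∈ X, ∃ p : G.Walk u v, p.length ≤ n}

/-- a locally finite connected graph with polynomial growth of degree at most
`d ≥ 2` satisfies the `O(n^(d-2))`-containment property. -/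
lemma walkBall_finite (G : SimpleGraph V) (hlf : LocallyFiniteGraph G) (g0 : V) :
    ∀ n : ℕ, {v | ∃ p : G.Walk g0 v, p.length ≤ n}.Finite := by
  intro n
  induction n with
  | zero =>
    apply Set.Finite.subset (Set.finite_singleton g0)
    rintro v ⟨p, hp⟩
    have := Walk.eq_of_length_eq_zero (Nat.le_zero.mp hp)
    simp [this]
  | succ n ih =>
    apply Set.Finite.subset (ih.union (Set.Finite.biUnion ih (fun u _ => hlf u)))
    rintro v ⟨p, hp⟩
    have hq : (p.reverse).length ≤ n + 1 := by rw [Walk.length_reverse]; exact hp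
    set q := p.reverse with hqdef
    clear_value q
    cases q with
    | nil => exact Or.inl ⟨Walk.nil, Nat.zero_le n⟩
    | @cons _ u _ h q' =>
      right
      refine Set.mem_biUnion (?_ : u ∈ {v | ∃ p : G.Walk g0 v, p.length ≤ n}) h.symm
      refine ⟨q'.reverse, ?_⟩
      rw [Walk.length_reverse]
      simpa using hq

lemma ball_finite (G : SimpleGraph V) (hlf : LocallyFiniteGraph G) (g0 : V) (n : ℕ) :
    (ball G g0 n).Finite := by
  apply (walkBall_finite G hlf g0 n).subset
  rintro v ⟨hr, hd⟩
  obtain ⟨p, hp⟩ := hr.exists_walk_length_eq_dist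
  exact ⟨p, hp ▸ hd⟩

lemma sphere_subset_ball (G : SimpleGraph V) (g0 : V) (n : ℕ) :
    sphere G g0 n ⊆ ball G g0 n := fun v hv => ⟨hv.1, hv.2.le⟩

lemma sphere_finite (G : SimpleGraph V) (hlf : LocallyFiniteGraph G) (g0 : V) (n : ℕ) :
    (sphere G g0 n).Finite :=
  (ball_finite G hlf g0 n).subset (sphere_subset_ball G g0 n)

lemma sum_sphere_le (G : SimpleGraph V) (hlf : LocallyFiniteGraph G) (g0 : V)
    (s : Finset ℕ) (M : ℕ) (hs : ∀ R ∈ s, R ≤ M) :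
    ∑ R ∈ s, (sphere G g0 R).ncard ≤ (ball G g0 M).ncard := by
  classical
  have hball := ball_finite G hlf g0 M
  calc ∑ R ∈ s, (sphere G g0 R).ncard
      = ∑ R ∈ s, (sphere_finite G hlf g0 R).toFinset.card :=
        Finset.sum_congr rfl (fun R _ => Set.ncard_eq_toFinset_card _ _)
    _ = (s.biUnion fun R => (sphere_finite G hlf g0 R).toFinset).card := by
        rw [Finset.card_biUnion]
        intro x _ y _ hxy
        simp only [Function.onFun]
        rw [Finset.disjoint_left]
        intro v hvx hvy
        rw [Set.Finite.mem_toFinset] at hvx hvy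
        exact hxy (hvx.2.symm.trans hvy.2)
    _ ≤ hball.toFinset.card := by
        apply Finset.card_le_card
        intro v hv
        rw [Finset.mem_biUnion] at hv
        obtain ⟨R, hR, hvR⟩ := hv
        rw [Set.Finite.mem_toFinset] at hvR ⊢
        exact ⟨hvR.1, hvR.2.le.trans (hs R hR)⟩
    _ = (ball G g0 M).ncard := (Set.ncard_eq_toFinset_card _ _).symm

theorem stmt0 {V : Type*} (G : SimpleGraph V) (hconn : G.Connected)
    (hlf : LocallyFiniteGraph G) (d : ℕ) (hd : 2 ≤ d) (g0 : V) (c : ℝ) (hc : 0 < c)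
    (hgrowth : ∀ n : ℕ, 1 ≤ n → ((ball G g0 n).ncard : ℝ) ≤ c * (n : ℝ) ^ d) :
    ∃ c' : ℕ, 1 ≤ c' ∧ HasContainmentProperty G 1 (fun n => c' * n ^ (d - 2)) := by
  classical
  set c' : ℕ := ⌈c * 5 ^ d⌉₊ + 1 with hc'def
  have hc'1 : 1 ≤ c' := Nat.le_add_left 1 _
  have hc'R : c * 5 ^ d + 1 ≤ (c' : ℝ) := by
    have := Nat.le_ceil (c * 5 ^ d)
    rw [hc'def]
    push_cast
    linarith
  clear_value c'
  refine ⟨c', hc'1, ?_⟩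
  intro X0 hX0
  obtain ⟨a0, ha0⟩ : ∃ a0 : ℕ, ∀ x ∈ X0, G.dist g0 x ≤ a0 := by
    obtain ⟨a, ha⟩ := (hX0.image (G.dist g0)).bddAbove
    exact ⟨a, fun x hx => ha (Set.mem_image_of_mem _ hx)⟩
  set m : ℕ := max a0 1 with hmdef
  have hm1 : 1 ≤ m := le_max_right _ _
  have ham : a0 ≤ m := le_max_left _ _
  set T : ℕ → ℕ := fun K => ∑ n ∈ Finset.Icc 1 K, c' * n ^ (d - 2) with hTdef
  have hTmono : Monotone T := fun i j hij =>
    Finset.sum_le_sum_of_subset (Finset.Icc_subset_Icc le_rfl hij)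
  have hT0 : T 0 = 0 := by
    rw [hTdef]
    simp
  have hTsucc : ∀ k : ℕ, T (k + 1) = T k + c' * (k + 1) ^ (d - 2) := fun k =>
    Finset.sum_Icc_succ_top (Nat.le_add_left 1 k) _
  have hT2m : c' * m ^ (d - 1) ≤ T (2 * m) := by
    have h1 : (Finset.Icc (m + 1) (2 * m)).card • (c' * m ^ (d - 2)) ≤
        ∑ n ∈ Finset.Icc (m + 1) (2 * m), c' * n ^ (d - 2) := by
      apply Finset.card_nsmul_le_sum
      intro x hx
      rw [Finset.mem_Icc] at hx
      exact Nat.mul_le_mul_left _ (Nat.pow_le_pow_left (by omega) _)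
    have hcard : (Finset.Icc (m + 1) (2 * m)).card = m := by
      rw [Nat.card_Icc]; omega
    have h2 : ∑ n ∈ Finset.Icc (m + 1) (2 * m), c' * n ^ (d - 2) ≤ T (2 * m) :=
      Finset.sum_le_sum_of_subset (Finset.Icc_subset_Icc (by omega) le_rfl)
    have h3 : m * (c' * m ^ (d - 2)) = c' * m ^ (d - 1) := by
      have hmm : m ^ (d - 2) * m = m ^ (d - 1) := by
        rw [← pow_succ]; congr 1; omega
      calc m * (c' * m ^ (d - 2)) = c' * (m ^ (d - 2) * m) := by ring
        _ = c' * m ^ (d - 1) := by rw [hmm]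
    rw [hcard, smul_eq_mul, h3] at h1
    exact h1.trans h2
  -- choose a good radius R
  have hexR : ∃ R, a0 + 2 * m < R ∧ (sphere G g0 R).ncard ≤ T (R - a0) := by
    by_contra hcon
    push_neg at hcon
    have hlow : ∀ R ∈ Finset.Ioc (a0 + 2 * m) (a0 + 4 * m),
        c' * m ^ (d - 1) + 1 ≤ (sphere G g0 R).ncard := by
      intro R hR
      rw [Finset.mem_Ioc] at hR
      have h1 := hcon R hR.1
      have h2 : T (2 * m) ≤ T (R - a0) := hTmono (by omega)
      omega
    have hsum1 : (Finset.Ioc (a0 + 2 * m) (a0 + 4 * m)).card • (c' * m ^ (d - 1) + 1) ≤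
        ∑ R ∈ Finset.Ioc (a0 + 2 * m) (a0 + 4 * m), (sphere G g0 R).ncard :=
      Finset.card_nsmul_le_sum _ _ _ hlow
    have hsum2 := sum_sphere_le G hlf g0 (Finset.Ioc (a0 + 2 * m) (a0 + 4 * m)) (a0 + 4 * m)
      (fun R hR => (Finset.mem_Ioc.mp hR).2)
    have hcard : (Finset.Ioc (a0 + 2 * m) (a0 + 4 * m)).card = 2 * m := by
      rw [Nat.card_Ioc]; omega
    rw [hcard, smul_eq_mul] at hsum1
    have hkey : 2 * m * (c' * m ^ (d - 1) + 1) ≤ (ball G g0 (a0 + 4 * m)).ncard :=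
      hsum1.trans hsum2
    have hg := hgrowth (a0 + 4 * m) (by omega)
    have hle5' : a0 + 4 * m ≤ 5 * m := by omega
    have hle5 : ((a0 + 4 * m : ℕ) : ℝ) ^ d ≤ ((5 * m : ℕ) : ℝ) ^ d := by
      apply pow_le_pow_left₀ (by positivity)
      exact_mod_cast hle5'
    have hchain : ((2 * m * (c' * m ^ (d - 1) + 1) : ℕ) : ℝ) ≤ c * ((5 * m : ℕ) : ℝ) ^ d :=
      calc ((2 * m * (c' * m ^ (d - 1) + 1) : ℕ) : ℝ)
          ≤ (((ball G g0 (a0 + 4 * m)).ncard : ℕ) : ℝ) := Nat.cast_le.mpr hkey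
        _ ≤ c * ((a0 + 4 * m : ℕ) : ℝ) ^ d := by exact_mod_cast hg
        _ ≤ c * ((5 * m : ℕ) : ℝ) ^ d := mul_le_mul_of_nonneg_left hle5 hc.le
    have hchainR : 2 * (m : ℝ) * ((c' : ℝ) * (m : ℝ) ^ (d - 1) + 1)
        ≤ c * ((5 * (m : ℝ)) ^ d) := by push_cast at hchain ⊢; convert hchain using 2
    have e1 : ((m : ℝ)) ^ (d - 1) * (m : ℝ) = (m : ℝ) ^ d := by
      rw [← pow_succ]; congr 1; omega
    have e2 : ((5 : ℝ) * (m : ℝ)) ^ d = 5 ^ d * (m : ℝ) ^ d := by rw [mul_pow]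
    have hm1R : (1 : ℝ) ≤ (m : ℝ) := by exact_mod_cast hm1
    have hmd : (1 : ℝ) ≤ (m : ℝ) ^ d := one_le_pow₀ hm1R
    have hprod : (c * 5 ^ d + 1) * (m : ℝ) ^ d ≤ (c' : ℝ) * (m : ℝ) ^ d :=
      mul_le_mul_of_nonneg_right hc'R (by positivity)
    have hexpand : 2 * (m : ℝ) * ((c' : ℝ) * (m : ℝ) ^ (d - 1) + 1)
        = 2 * ((c' : ℝ) * (m : ℝ) ^ d) + 2 * (m : ℝ) := by
      rw [← e1]; ring
    rw [e2, hexpand] at hchainR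
    have hpos : (0 : ℝ) ≤ c * 5 ^ d * (m : ℝ) ^ d := by positivity
    nlinarith [hchainR, hprod, hmd, hm1R, hpos]
  obtain ⟨R, hRgt, hRcard⟩ := hexR
  set K := R - a0 with hKdef
  have hK1 : 1 ≤ K := by omega
  have hRK : R = a0 + K := by omega
  -- enumerate the sphere of radius R
  have hsph := sphere_finite G hlf g0 R
  set sF := hsph.toFinset with hsFdef
  have hcardsF : sF.card = (sphere G g0 R).ncard := (Set.ncard_eq_toFinset_card _ hsph).symm
  set e := sF.equivFin with hedef
  set idx : V → ℕ := fun v => if h : v ∈ sF then (e ⟨v, h⟩ : Fin sF.card).val else 0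
    with hidxdef
  have idx_lt : ∀ v ∈ sphere G g0 R, idx v < sF.card := by
    intro v hv
    have hvF : v ∈ sF := hsph.mem_toFinset.mpr hv
    simp only [hidxdef, dif_pos hvF]
    exact (e ⟨v, hvF⟩).isLt
  have idx_inj : ∀ v1 ∈ sphere G g0 R, ∀ v2 ∈ sphere G g0 R, idx v1 = idx v2 → v1 = v2 := by
    intro v1 h1 v2 h2 h
    have h1F : v1 ∈ sF := hsph.mem_toFinset.mpr h1
    have h2F : v2 ∈ sF := hsph.mem_toFinset.mpr h2
    simp only [hidxdef, dif_pos h1F, dif_pos h2F] at h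
    have := e.injective (Fin.val_injective h)
    exact Subtype.ext_iff.mp this
  have hcardT : sF.card ≤ T K := by rw [hcardsF]; exact hRcard
  -- the strategy
  set W : ℕ → Set V := fun n => {v | v ∈ sphere G g0 R ∧ T (n - 1) ≤ idx v ∧ idx v < T n}
    with hWdef
  have hWsub : ∀ n, W n ⊆ sphere G g0 R := fun n v hv => hv.1
  have hcover : ∀ v ∈ sphere G g0 R, ∃ i, 1 ≤ i ∧ i ≤ K ∧ v ∈ W i := by
    intro v hv
    have hvlt : idx v < T K := lt_of_lt_of_le (idx_lt v hv) hcardT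
    have hex : ∃ i, idx v < T i := ⟨K, hvlt⟩
    have hi : idx v < T (Nat.find hex) := Nat.find_spec hex
    have hiK : Nat.find hex ≤ K := Nat.find_le hvlt
    have hi1 : 1 ≤ Nat.find hex := by
      rcases Nat.eq_zero_or_pos (Nat.find hex) with h0 | h
      · rw [h0, hT0] at hi; omega
      · exact h
    have hprev : T (Nat.find hex - 1) ≤ idx v := by
      have := Nat.find_min hex (m := Nat.find hex - 1) (by omega)
      omega
    exact ⟨Nat.find hex, hi1, hiK, hv, hprev, hi⟩
  have hWempty : ∀ i, K < i → W i = ∅ := by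
    intro i hKi
    ext v
    simp only [hWdef, Set.mem_setOf_eq, Set.mem_empty_iff_false, iff_false, not_and]
    intro hv hle
    have h1 : idx v < sF.card := idx_lt v hv
    have h2 : T K ≤ T (i - 1) := hTmono (by omega)
    omega
  have hWcard : ∀ n, 1 ≤ n → (W n).Finite ∧ (W n).ncard ≤ c' * n ^ (d - 2) := by
    intro n hn
    have hfin : (W n).Finite := hsph.subset (hWsub n)
    refine ⟨hfin, ?_⟩
    have h1 : (W n).ncard ≤ (Set.Ico (T (n - 1)) (T n)).ncard := by
      apply Set.ncard_le_ncard_of_injOn idx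
      · rintro v ⟨hv, h2, h3⟩; exact ⟨h2, h3⟩
      · intro v1 hv1 v2 hv2 h; exact idx_inj v1 hv1.1 v2 hv2.1 h
    have h2 : (Set.Ico (T (n - 1)) (T n)).ncard = T n - T (n - 1) := by
      rw [← Finset.coe_Ico, Set.ncard_coe_finset, Nat.card_Ico]
    obtain ⟨k, rfl⟩ : ∃ k, n = k + 1 := ⟨n - 1, by omega⟩
    have h3 := hTsucc k
    have h4 : k + 1 - 1 = k := by omega
    rw [h4] at h1 h2
    set q := c' * (k + 1) ^ (d - 2) with hqdef
    omega
  -- invariant: fire is trapped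
  have fire0 : fireSet G 1 X0 W 0 = X0 := rfl
  have hinv : ∀ n, ∀ v ∈ fireSet G 1 X0 W n, G.dist g0 v ≤ min (a0 + n) (R - 1) := by
    intro n
    induction n with
    | zero =>
      intro v hv
      have := ha0 v hv
      exact le_min (by omega) (by omega)
    | succ n ih =>
      rintro v ⟨u, hu, p, hp1, havoid⟩
      have hdu := ih u hu
      have hduv : G.dist u v ≤ 1 := le_trans (SimpleGraph.dist_le p) hp1
      have htri : G.dist g0 v ≤ G.dist g0 u + G.dist u v := hconn.dist_triangle
      refine le_min (by omega) ?_
      by_contra hcon2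
      push_neg at hcon2
      have hdR : G.dist g0 v = R := by omega
      have hvsph : v ∈ sphere G g0 R := ⟨hconn.preconnected g0 v, hdR⟩
      obtain ⟨i, hi1, hiK, hvW⟩ := hcover v hvsph
      exact havoid v (Walk.end_mem_support p) i hi1 (by omega) hvW
  have hnotsph : ∀ n, ∀ v ∈ fireSet G 1 X0 W n, v ∉ sphere G g0 R := by
    intro n v hv hvs
    have h1 := hinv n v hv
    have h2 := hvs.2
    omega
  have hfireball : ∀ n, fireSet G 1 X0 W n ⊆ ball G g0 (R - 1) := fun n v hv =>
    ⟨hconn.preconnected g0 v, (hinv n v hv).trans (min_le_right _ _)⟩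
  have hdisj : ∀ n, Disjoint (fireSet G 1 X0 W n) (W (n + 1)) := fun n =>
    Set.disjoint_left.mpr (fun {v} hv hW => hnotsph n v hv (hWsub _ hW))
  have hmono : ∀ n, fireSet G 1 X0 W n ⊆ fireSet G 1 X0 W (n + 1) := by
    intro n u hu
    refine ⟨u, hu, Walk.nil, by simp, ?_⟩
    intro w hw i _ _ hWi
    simp only [Walk.support_nil, List.mem_singleton] at hw
    subst hw
    exact hnotsph n _ hu (hWsub i hWi)
  -- stationarity of the recursion after time K
  have hstep : ∀ n, K ≤ n → fireSet G 1 X0 W (n + 1) = fireSet G 1 X0 W n →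
      fireSet G 1 X0 W (n + 2) = fireSet G 1 X0 W (n + 1) := by
    intro n hKn heq
    apply Set.Subset.antisymm
    · rintro v ⟨u, hu, p, hp, hav⟩
      rw [heq] at hu
      exact ⟨u, hu, p, hp, fun w hw i h1 h2 => hav w hw i h1 (by omega)⟩
    · rintro v ⟨u, hu, p, hp, hav⟩
      rw [← heq] at hu
      refine ⟨u, hu, p, hp, ?_⟩
      intro w hw i h1 h2
      by_cases hiK : i ≤ n + 1
      · exact hav w hw i h1 hiK
      · rw [hWempty i (by omega)]
        simp
  -- the fire stabilizes
  have hballfin := ball_finite G hlf g0 (R - 1)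
  set B := (ball G g0 (R - 1)).ncard with hBdef
  have hfirefin : ∀ n, (fireSet G 1 X0 W n).Finite := fun n => hballfin.subset (hfireball n)
  have hfirecard : ∀ n, (fireSet G 1 X0 W n).ncard ≤ B := fun n =>
    Set.ncard_le_ncard (hfireball n) hballfin
  have hexj : ∃ j, j ≤ B ∧ fireSet G 1 X0 W (K + j + 1) = fireSet G 1 X0 W (K + j) := by
    by_contra hcon
    push_neg at hcon
    have hgrow : ∀ j, j ≤ B + 1 → j ≤ (fireSet G 1 X0 W (K + j)).ncard := by
      intro j
      induction j with
      | zero => intro _; exact Nat.zero_le _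
      | succ j ih =>
        intro hj
        have h1 := ih (by omega)
        have hne := hcon j (by omega)
        have hss : fireSet G 1 X0 W (K + j) ⊂ fireSet G 1 X0 W (K + j + 1) :=
          ssubset_of_subset_of_ne (hmono _) (Ne.symm hne)
        have h2 := Set.ncard_lt_ncard hss (hfirefin _)
        have h3 : K + (j + 1) = K + j + 1 := by omega
        rw [h3]
        omega
    have h4 := hgrow (B + 1) le_rfl
    have h5 := hfirecard (K + (B + 1))
    omega
  obtain ⟨j, hjB, hjeq⟩ := hexj
  have hconst : ∀ n, K + j ≤ n →
      fireSet G 1 X0 W (n + 1) = fireSet G 1 X0 W n := by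
    intro n hn
    induction n, hn using Nat.le_induction with
    | base => exact hjeq
    | succ n hn ih => exact hstep n (by omega) ih
  refine ⟨W, hWcard, hdisj, K + j, by omega, ?_⟩
  intro n hn
  induction n, hn using Nat.le_induction with
  | base => rfl
  | succ n hn ih => rw [← ih]; exact hconst n hn


end Firefighter
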